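/- In any feasible matching M for a p-subset A of [p+q], the interval [i..j] spanned by each arc (i,j) ∈ M is partitioned exactly into arcs of M; consequently j - i is odd for every arc (i,j) ∈ M. -/

import Mathlib

open Finset

/-- The two-element set of endpoints of an arc `π = (i,j)`. -/
def arcSet (π : ℕ × ℕ) : Finset ℕ := {π.1, π.2}

/-- `M` is a feasible matching for the `p`-subset `A` of `[p+q] = {1,…,p+q}`:
`q` pairwise disjoint nested arcs `(i,j)`, `i<j`, each containing exactly one element
of `A` and one of its complement, with no free element covered by an arc's interval. -/
def IsFeasibleMatching (p q : ℕ) (A : Finset ℕ) (M : Finset (ℕ × ℕ)) : Prop :=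
  M.card = q ∧
  (∀ π ∈ M, 1 ≤ π.1 ∧ π.1 < π.2 ∧ π.2 ≤ p + q) ∧
  (∀ π ∈ M, ∀ π' ∈ M, π ≠ π' → Disjoint (arcSet π) (arcSet π')) ∧
  (∀ π ∈ M, (arcSet π ∩ A).card = 1 ∧
            (arcSet π ∩ (Finset.Icc 1 (p + q) \ A)).card = 1) ∧
  (∀ π ∈ M, ∀ π' ∈ M,
      Disjoint (Finset.Icc π.1 π.2) (Finset.Icc π'.1 π'.2) ∨
      Finset.Icc π.1 π.2 ⊆ Finset.Icc π'.1 π'.2 ∨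
      Finset.Icc π'.1 π'.2 ⊆ Finset.Icc π.1 π.2) ∧
  (∀ k ∈ Finset.Icc 1 (p + q), (∀ π ∈ M, k ∉ arcSet π) →
      ∀ π ∈ M, k ∉ Finset.Icc π.1 π.2)

open Classical in
/-- The number of members of the collection `𝒜` for which `M` is a feasible matching. -/
noncomputable def feasCount (p q : ℕ) (𝒜 : Finset (Finset ℕ)) (M : Finset (ℕ × ℕ)) : ℕ :=
  (𝒜.filter (fun A => IsFeasibleMatching p q A M)).card

/-- Two collections of `p`-subsets of `[p+q]` are balanced if every matching is a
feasible matching for equally many members of each. -/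
def BalancedPair (p q : ℕ) (𝒜 𝒜' : Finset (Finset ℕ)) : Prop :=
  ∀ M : Finset (ℕ × ℕ), feasCount p q 𝒜 M = feasCount p q 𝒜' M


/-- In a feasible matching `M` for a `p`-subset `A` of `[p+q]`, the interval `[i..j]`
of each arc `(i,j) ∈ M` is partitioned exactly into arcs of `M` (it is the disjoint
union of the endpoint-sets of the arcs of `M` lying inside it, and every element of the
interval lies in exactly one arc of `M`); consequently `j - i` is odd. -/
theorem stmt6 (p q : ℕ) (A : Finset ℕ) (hA : A ⊆ Finset.Icc 1 (p + q))
    (hAcard : A.card = p) (M : Finset (ℕ × ℕ))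
    (hM : IsFeasibleMatching p q A M) (π : ℕ × ℕ) (hπ : π ∈ M) :
    Finset.Icc π.1 π.2 =
      (M.filter (fun π' => arcSet π' ⊆ Finset.Icc π.1 π.2)).biUnion arcSet ∧
    (∀ k ∈ Finset.Icc π.1 π.2, ∃! π' : ℕ × ℕ, π' ∈ M ∧ k ∈ arcSet π') ∧
    Odd (π.2 - π.1) := by
  obtain ⟨hcard, hrange, hdisj, hcross, hnest, hfree⟩ := hM
  obtain ⟨h1, hlt, hle⟩ := hrange π hπ
  have cover : ∀ k ∈ Finset.Icc π.1 π.2, ∃ π' ∈ M, k ∈ arcSet π' := by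
    intro k hk
    by_contra h
    push_neg at h
    have hk' : k ∈ Finset.Icc 1 (p + q) := by
      simp only [Finset.mem_Icc] at hk ⊢; omega
    exact hfree k hk' h π hπ hk
  have sub : ∀ π' ∈ M, ∀ k, k ∈ arcSet π' → k ∈ Finset.Icc π.1 π.2 →
      arcSet π' ⊆ Finset.Icc π.1 π.2 := by
    intro π' hπ' k hkarc hkI
    obtain ⟨h1', hlt', hle'⟩ := hrange π' hπ'
    by_cases heq : π' = π
    · subst heq
      intro x hx
      simp only [arcSet, Finset.mem_insert, Finset.mem_singleton] at hx
      simp only [Finset.mem_Icc]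
      rcases hx with h | h <;> omega
    · have hkI' : k ∈ Finset.Icc π'.1 π'.2 := by
        simp only [arcSet, Finset.mem_insert, Finset.mem_singleton] at hkarc
        simp only [Finset.mem_Icc]
        rcases hkarc with h | h <;> omega
      rcases hnest π' hπ' π hπ with hd | hs | hs
      · exact absurd hkI (Finset.disjoint_left.mp hd hkI')
      · intro x hx
        apply hs
        simp only [arcSet, Finset.mem_insert, Finset.mem_singleton] at hx
        simp only [Finset.mem_Icc]
        rcases hx with h | h <;> omega
      · exfalso
        have hd := hdisj π' hπ' π hπ heq
        rw [Finset.Icc_subset_Icc_iff (le_of_lt hlt)] at hs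
        have h11 : π'.1 ≠ π.1 := by
          intro h
          exact Finset.disjoint_left.mp hd (show π'.1 ∈ arcSet π' by simp [arcSet])
            (by simp [arcSet, h])
        have h22 : π'.2 ≠ π.2 := by
          intro h
          exact Finset.disjoint_left.mp hd (show π'.2 ∈ arcSet π' by simp [arcSet])
            (by simp [arcSet, h])
        simp only [arcSet, Finset.mem_insert, Finset.mem_singleton] at hkarc
        simp only [Finset.mem_Icc] at hkI
        rcases hkarc with h | h <;> omega
  have uniq : ∀ k ∈ Finset.Icc π.1 π.2, ∃! π' : ℕ × ℕ, π' ∈ M ∧ k ∈ arcSet π' := by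
    intro k hk
    obtain ⟨π', hπ', hkarc⟩ := cover k hk
    refine ⟨π', ⟨hπ', hkarc⟩, ?_⟩
    rintro π'' ⟨hπ'', hkarc'⟩
    by_contra hne
    exact Finset.disjoint_left.mp (hdisj π'' hπ'' π' hπ' hne) hkarc' hkarc
  have hpart : Finset.Icc π.1 π.2 =
      (M.filter (fun π' => arcSet π' ⊆ Finset.Icc π.1 π.2)).biUnion arcSet := by
    ext k
    simp only [Finset.mem_biUnion, Finset.mem_filter]
    constructor
    · intro hk
      obtain ⟨π', hπ', hkarc⟩ := cover k hk
      exact ⟨π', ⟨hπ', sub π' hπ' k hkarc hk⟩, hkarc⟩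
    · rintro ⟨π', ⟨hπ', hsub⟩, hkarc⟩
      exact hsub hkarc
  refine ⟨hpart, uniq, ?_⟩
  set S := M.filter (fun π' => arcSet π' ⊆ Finset.Icc π.1 π.2) with hS
  have hcards : (Finset.Icc π.1 π.2).card = 2 * S.card := by
    rw [hpart, Finset.card_biUnion]
    · rw [Finset.sum_congr rfl (fun π' hπ' => ?_), Finset.sum_const, smul_eq_mul,
        mul_comm]
      obtain ⟨_, hlt', _⟩ := hrange π' (Finset.mem_filter.mp hπ').1
      simp only [arcSet]
      rw [Finset.card_insert_of_notMem (by simp; omega), Finset.card_singleton]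
    · intro x hx y hy hxy
      exact hdisj x (Finset.mem_filter.mp hx).1 y (Finset.mem_filter.mp hy).1 hxy
  rw [Nat.card_Icc] at hcards
  exact ⟨S.card - 1, by omega⟩
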